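/- Let T be a rooted tree decomposition of G with root r such that the treewidth of G is at most k and |B_r| > 2(k+1). Then there exists a split of T, i.e., a good partition P = (C_1, C_2, C_3, S) of V together with a labeling function a from nodes of T to nonempty subsets of {1,2,3} such that for every node x: (a) if some C_i meets B_x then a(x) = {i : C_i ∩ B_x ≠ ∅}, otherwise a(x) is a singleton subset of a(p(x)); and (b) a(x) ⊆ a(p(x)). -/

import Mathlib

open SimpleGraph

/-- A rooted tree decomposition of a graph `G` with node type `ι`. -/
structure RootedTD (V : Type) (G : SimpleGraph V) (ι : Type) where
  T : SimpleGraph ι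
  tree : T.IsTree
  bag : ι → Finset V
  root : ι
  parent : ι → ι
  parent_root : parent root = root
  parent_adj : ∀ x, x ≠ root → T.Adj x (parent x)
  parent_reach : ∀ x, ∃ n, parent^[n] x = root
  vert_cover : ∀ v, ∃ x, v ∈ bag x
  edge_cover : ∀ ⦃u v⦄, G.Adj u v → ∃ x, u ∈ bag x ∧ v ∈ bag x
  conn : ∀ (v : V) (x y : ι) (w : T.Walk x y), w.IsPath →
      v ∈ bag x → v ∈ bag y → ∀ z ∈ w.support, v ∈ bag z

/-- The union of the bags in the subtree of D rooted at y. -/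
def RootedTD.Vsub {V : Type} {G : SimpleGraph V} {ι : Type}
    (D : RootedTD V G ι) (y : ι) : Set V :=
  {v | ∃ z, (∃ n, D.parent^[n] z = y) ∧ v ∈ D.bag z}

/-- A 4-partition (C 0, C 1, C 2, X) of a vertex set, where X is the separator part. -/
structure Part4 (V : Type) where
  C : Fin 3 → Set V
  X : Set V

/-- P is a partition of the set A. -/
def Part4.IsPartitionOf {V : Type} (P : Part4 V) (A : Set V) : Prop :=
  (∀ i j, i ≠ j → Disjoint (P.C i) (P.C j)) ∧
  (∀ i, Disjoint (P.C i) P.X) ∧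
  (P.X ∪ ⋃ i, P.C i) = A

/-- P is legal: no edge of G between distinct parts C i and C j. -/
def Part4.Legal {V : Type} (G : SimpleGraph V) (P : Part4 V) : Prop :=
  ∀ i j, i ≠ j → ∀ u ∈ P.C i, ∀ v ∈ P.C j, ¬ G.Adj u v

/-- Partitions P of A and Q of A' are compatible: they agree on A ∩ A'. -/
def Part4.Compatible {V : Type} (P Q : Part4 V) (A A' : Set V) : Prop :=
  ∀ v ∈ A ∩ A', (∀ i, (v ∈ P.C i ↔ v ∈ Q.C i)) ∧ (v ∈ P.X ↔ v ∈ Q.X)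

/-- The partition induced by P on a subset A. -/
def Part4.restrict {V : Type} (P : Part4 V) (A : Set V) : Part4 V :=
  ⟨fun i => P.C i ∩ A, P.X ∩ A⟩

/-- The size of a partition P of the bag of y: the minimum size of the separator
part over all legal partitions of V_y compatible with P. -/
noncomputable def psize {V ι : Type} (G : SimpleGraph V) (D : RootedTD V G ι)
    (y : ι) (P : Part4 V) : ℕ :=
  sInf {n | ∃ Q : Part4 V, Q.IsPartitionOf (D.Vsub y) ∧ Q.Legal G ∧
      Q.Compatible P (D.Vsub y) (D.bag y : Set V) ∧ Q.X.ncard = n}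

/-- The partition Py of the bag of y is good with respect to the partition Px of
the bag of the parent of y. -/
def GoodWrt {V ι : Type} (G : SimpleGraph V) (D : RootedTD V G ι)
    (y : ι) (Py Px : Part4 V) : Prop :=
  Py.IsPartitionOf (D.bag y : Set V) ∧ Py.Legal G ∧
  Py.Compatible Px (D.bag y : Set V) (D.bag (D.parent y) : Set V) ∧
  (∀ Q : Part4 V, Q.IsPartitionOf (D.bag y : Set V) → Q.Legal G →
      Q.Compatible Px (D.bag y : Set V) (D.bag (D.parent y) : Set V) →
      psize G D y Py ≤ psize G D y Q) ∧
  (∀ Q : Part4 V, Q.IsPartitionOf (D.bag y : Set V) → Q.Legal G →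
      Q.Compatible Px (D.bag y : Set V) (D.bag (D.parent y) : Set V) →
      psize G D y Q = psize G D y Py → Q.X.ncard ≤ Py.X.ncard)

/-- The partition Pr of the root bag is good. -/
def GoodRoot {V ι : Type} (G : SimpleGraph V) (D : RootedTD V G ι)
    (k : ℕ) (Pr : Part4 V) : Prop :=
  (∀ i, (Pr.C i).ncard + psize G D D.root Pr < (D.bag D.root).card) ∧
  psize G D D.root Pr ≤ k + 1

namespace RootedTD

variable {V : Type} {G : SimpleGraph V} {ι : Type} (D : RootedTD V G ι)

noncomputable def depth (y : ι) : ℕ := sInf {n | D.parent^[n] y = D.root}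

lemma depth_spec (y : ι) : D.parent^[D.depth y] y = D.root :=
  Nat.sInf_mem (D.parent_reach y)

lemma depth_le {y : ι} {n : ℕ} (h : D.parent^[n] y = D.root) : D.depth y ≤ n :=
  Nat.sInf_le h

lemma depth_root : D.depth D.root = 0 :=
  Nat.le_zero.mp (D.depth_le (by simp))

lemma root_of_depth_eq_zero {y : ι} (h : D.depth y = 0) : y = D.root := by
  have := D.depth_spec y
  rwa [h, Function.iterate_zero_apply] at this

lemma iterate_parent_root (n : ℕ) : D.parent^[n] D.root = D.root := by
  induction n with
  | zero => simp
  | succ n ih => rw [Function.iterate_succ_apply', ih, D.parent_root]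

lemma depth_parent {y : ι} (h : y ≠ D.root) : D.depth (D.parent y) + 1 = D.depth y := by
  have h2 : 1 ≤ D.depth y := by
    rcases Nat.eq_zero_or_pos (D.depth y) with h0 | h0
    · exact absurd (D.root_of_depth_eq_zero h0) h
    · exact h0
  have h1 : D.depth y ≤ D.depth (D.parent y) + 1 :=
    D.depth_le (by rw [Function.iterate_succ_apply]; exact D.depth_spec (D.parent y))
  have h3 : D.parent^[D.depth y - 1] (D.parent y) = D.root := by
    rw [← Function.iterate_succ_apply, Nat.succ_eq_add_one, Nat.sub_add_cancel h2]
    exact D.depth_spec y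
  have h4 : D.depth (D.parent y) ≤ D.depth y - 1 := D.depth_le h3
  omega

lemma depth_iterate {y : ι} {a : ℕ} (h : a ≤ D.depth y) :
    D.depth (D.parent^[a] y) = D.depth y - a := by
  induction a with
  | zero => simp
  | succ a ih =>
    have ha : a ≤ D.depth y := Nat.le_of_succ_le h
    have hz : D.depth (D.parent^[a] y) = D.depth y - a := ih ha
    have hne : D.parent^[a] y ≠ D.root := by
      intro he
      have : D.depth (D.parent^[a] y) = 0 := by rw [he]; exact D.depth_root
      omega
    have := D.depth_parent hne
    rw [Function.iterate_succ_apply']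
    omega

lemma iterate_eq_root_of_ge {y : ι} {n : ℕ} (h : D.depth y ≤ n) :
    D.parent^[n] y = D.root := by
  have : D.parent^[n - D.depth y + D.depth y] y = D.root := by
    rw [Function.iterate_add_apply, D.depth_spec, D.iterate_parent_root]
  rwa [Nat.sub_add_cancel h] at this

lemma exists_walkUp (n : ℕ) (y : ι) (h : n ≤ D.depth y) :
    ∃ w : D.T.Walk y (D.parent^[n] y),
      w.support = (List.range (n + 1)).map (fun a => D.parent^[a] y) := by
  induction n with
  | zero => exact ⟨Walk.nil, by simp⟩
  | succ n ih =>
    obtain ⟨w, hw⟩ := ih (Nat.le_of_succ_le h)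
    have hne : D.parent^[n] y ≠ D.root := by
      intro he
      have h1 : D.depth (D.parent^[n] y) = D.depth y - n :=
        D.depth_iterate (Nat.le_of_succ_le h)
      rw [he, D.depth_root] at h1
      omega
    have hadj : D.T.Adj (D.parent^[n] y) (D.parent^[n+1] y) := by
      rw [Function.iterate_succ_apply']
      exact D.parent_adj _ hne
    refine ⟨w.concat hadj, ?_⟩
    rw [Walk.support_concat, hw, List.range_succ (n := n + 1),
      List.map_append, List.map_singleton]

theorem bag_chain {v : V} {x y : ι} (hx : v ∈ D.bag x) (hy : v ∈ D.bag y) :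
    ∃ i j, i ≤ D.depth x ∧ j ≤ D.depth y ∧ D.parent^[i] x = D.parent^[j] y ∧
      (∀ a ≤ i, v ∈ D.bag (D.parent^[a] x)) ∧ (∀ b ≤ j, v ∈ D.bag (D.parent^[b] y)) := by
  classical
  set S : Set ℕ := {i | i ≤ D.depth x ∧ ∃ b ≤ D.depth y, D.parent^[i] x = D.parent^[b] y} with hS
  have hSne : S.Nonempty :=
    ⟨D.depth x, le_rfl, D.depth y, le_rfl, by rw [D.depth_spec, D.depth_spec]⟩
  set i := sInf S with hidef
  obtain ⟨hi, j, hj, hij⟩ := Nat.sInf_mem hSne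
  have hmin : ∀ a, a < i → a ≤ D.depth x → ∀ b ≤ D.depth y,
      D.parent^[a] x ≠ D.parent^[b] y := by
    intro a ha hax b hb heq
    exact Nat.notMem_of_lt_sInf ha ⟨hax, b, hb, heq⟩
  obtain ⟨wx, hwx⟩ := D.exists_walkUp i x hi
  obtain ⟨wy, hwy⟩ := D.exists_walkUp j y hj
  set w : D.T.Walk x y := wx.append ((wy.reverse).copy hij.symm rfl) with hwdef
  have hinjx : ∀ a ∈ List.range (i+1), ∀ b ∈ List.range (i+1),
      D.parent^[a] x = D.parent^[b] y → True := fun _ _ _ _ _ => trivial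
  have hsupp : w.support = (List.range (i+1)).map (fun a => D.parent^[a] x) ++
      ((List.range j).map (fun b => D.parent^[b] y)).reverse := by
    rw [hwdef, Walk.support_append, Walk.support_copy, Walk.support_reverse, hwx, hwy,
      List.range_succ (n := j), List.map_append, List.reverse_append]
    simp
  have hnodup : w.support.Nodup := by
    rw [hsupp]
    rw [List.nodup_append]
    refine ⟨?_, ?_, ?_⟩
    · refine List.Nodup.map_on ?_ List.nodup_range
      intro a ha b hb hab
      rw [List.mem_range] at ha hb
      have h1 := D.depth_iterate (y := x) (a := a) (by omega)
      have h2 := D.depth_iterate (y := x) (a := b) (by omega)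
      rw [hab] at h1
      omega
    · rw [List.nodup_reverse]
      refine List.Nodup.map_on ?_ List.nodup_range
      intro a ha b hb hab
      rw [List.mem_range] at ha hb
      have h1 := D.depth_iterate (y := y) (a := a) (by omega)
      have h2 := D.depth_iterate (y := y) (a := b) (by omega)
      rw [hab] at h1
      omega
    · intro u hu1 u' hu2 huu'
      subst huu'
      rw [List.mem_map] at hu1
      obtain ⟨a, ha, hau⟩ := hu1
      rw [List.mem_reverse, List.mem_map] at hu2
      obtain ⟨b, hb, hbu⟩ := hu2
      rw [List.mem_range] at ha hb
      have heq : D.parent^[a] x = D.parent^[b] y := by rw [hau, hbu]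
      rcases Nat.lt_or_ge a i with hai | hai
      · exact hmin a hai (by omega) b (by omega) heq
      · have hae : a = i := by omega
        rw [hae, hij] at heq
        have h1 := D.depth_iterate (y := y) (a := b) (by omega)
        have h2 := D.depth_iterate (y := y) (a := j) hj
        rw [heq] at h2
        omega
  have hpath : w.IsPath := (Walk.isPath_def w).mpr hnodup
  have hall := D.conn v x y w hpath hx hy
  refine ⟨i, j, hi, hj, hij, ?_, ?_⟩
  · intro a ha
    apply hall
    rw [hsupp]
    apply List.mem_append_left
    exact List.mem_map.mpr ⟨a, List.mem_range.mpr (by omega), rfl⟩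
  · intro b hb
    rcases Nat.lt_or_ge b j with hbj | hbj
    · apply hall
      rw [hsupp]
      apply List.mem_append_right
      rw [List.mem_reverse]
      exact List.mem_map.mpr ⟨b, List.mem_range.mpr hbj, rfl⟩
    · have : b = j := by omega
      subst this
      rw [← hij]
      apply hall
      rw [hsupp]
      apply List.mem_append_left
      exact List.mem_map.mpr ⟨i, List.mem_range.mpr (by omega), rfl⟩

end RootedTD
section Stage2

namespace Part4

variable {V : Type}

lemma ext' {P Q : Part4 V} (h1 : P.C = Q.C) (h2 : P.X = Q.X) : P = Q := by
  cases P; cases Q; simp_all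

lemma C_subset {P : Part4 V} {A : Set V} (h : P.IsPartitionOf A) (i : Fin 3) :
    P.C i ⊆ A := by
  intro v hv
  rw [← h.2.2]
  exact Or.inr (Set.mem_iUnion.mpr ⟨i, hv⟩)

lemma X_subset {P : Part4 V} {A : Set V} (h : P.IsPartitionOf A) : P.X ⊆ A := by
  intro v hv
  rw [← h.2.2]
  exact Or.inl hv

lemma mem_cases {P : Part4 V} {A : Set V} (h : P.IsPartitionOf A) {v : V} (hv : v ∈ A) :
    v ∈ P.X ∨ ∃ i, v ∈ P.C i := by
  rw [← h.2.2] at hv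
  rcases hv with hv | hv
  · exact Or.inl hv
  · obtain ⟨i, hi⟩ := Set.mem_iUnion.mp hv
    exact Or.inr ⟨i, hi⟩

lemma not_memX_of_memC {P : Part4 V} {A : Set V} (h : P.IsPartitionOf A) {v : V} {i : Fin 3}
    (hv : v ∈ P.C i) : v ∉ P.X := fun hx => (h.2.1 i).le_bot ⟨hv, hx⟩

lemma C_unique {P : Part4 V} {A : Set V} (h : P.IsPartitionOf A) {v : V} {i j : Fin 3}
    (hi : v ∈ P.C i) (hj : v ∈ P.C j) : i = j := by
  by_contra hne
  exact (h.1 i j hne).le_bot ⟨hi, hj⟩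

lemma legal_subset {G : SimpleGraph V} {P Q : Part4 V} (hsub : ∀ i, P.C i ⊆ Q.C i)
    (hQ : Q.Legal G) : P.Legal G :=
  fun i j hij u hu v hv => hQ i j hij u (hsub i hu) v (hsub j hv)

lemma restrict_isPartitionOf {P : Part4 V} {A B : Set V} (h : P.IsPartitionOf A) :
    (P.restrict B).IsPartitionOf (A ∩ B) := by
  refine ⟨?_, ?_, ?_⟩
  · intro i j hij
    exact Set.disjoint_left.mpr fun v ⟨hv, _⟩ ⟨hv', _⟩ =>
      Set.disjoint_left.mp (h.1 i j hij) hv hv'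
  · intro i
    exact Set.disjoint_left.mpr fun v ⟨hv, _⟩ ⟨hv', _⟩ =>
      Set.disjoint_left.mp (h.2.1 i) hv hv'
  · ext v
    simp only [Part4.restrict, Set.mem_union, Set.mem_iUnion, Set.mem_inter_iff]
    constructor
    · rintro (⟨hv, hb⟩ | ⟨i, hv, hb⟩)
      · exact ⟨X_subset h hv, hb⟩
      · exact ⟨C_subset h i hv, hb⟩
    · rintro ⟨ha, hb⟩
      rcases mem_cases h ha with hx | ⟨i, hi⟩
      · exact Or.inl ⟨hx, hb⟩
      · exact Or.inr ⟨i, hi, hb⟩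

lemma restrict_legal {G : SimpleGraph V} {P : Part4 V} {B : Set V} (h : P.Legal G) :
    (P.restrict B).Legal G :=
  legal_subset (fun _ _ hv => hv.1) h

/-- Relabeling the C-classes of a partition along g. -/
def relabel (P : Part4 V) (g : Fin 3 → Fin 3) : Part4 V :=
  ⟨fun i => ⋃ j ∈ {j | g j = i}, P.C j, P.X⟩

lemma mem_relabel_C {P : Part4 V} {g : Fin 3 → Fin 3} {i : Fin 3} {v : V} :
    v ∈ (P.relabel g).C i ↔ ∃ j, g j = i ∧ v ∈ P.C j := by
  simp [relabel]

lemma relabel_isPartitionOf {P : Part4 V} {A : Set V} (h : P.IsPartitionOf A)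
    (g : Fin 3 → Fin 3) : (P.relabel g).IsPartitionOf A := by
  refine ⟨?_, ?_, ?_⟩
  · intro i j hij
    rw [Set.disjoint_left]
    intro v hvi hvj
    obtain ⟨a, ha, hva⟩ := mem_relabel_C.mp hvi
    obtain ⟨b, hb, hvb⟩ := mem_relabel_C.mp hvj
    have : a = b := C_unique h hva hvb
    subst this
    exact hij (ha ▸ hb ▸ rfl)
  · intro i
    rw [Set.disjoint_left]
    intro v hvi hvx
    obtain ⟨a, _, hva⟩ := mem_relabel_C.mp hvi
    exact not_memX_of_memC h hva hvx
  · rw [← h.2.2]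
    congr 1
    ext v
    simp only [Set.mem_iUnion]
    constructor
    · rintro ⟨i, hi⟩
      obtain ⟨j, _, hj⟩ := mem_relabel_C.mp hi
      exact ⟨j, hj⟩
    · rintro ⟨j, hj⟩
      exact ⟨g j, mem_relabel_C.mpr ⟨j, rfl, hj⟩⟩

lemma relabel_legal {G : SimpleGraph V} {P : Part4 V} (h : P.Legal G) (g : Fin 3 → Fin 3) :
    (P.relabel g).Legal G := by
  intro i j hij u hu v hv
  obtain ⟨a, ha, hua⟩ := mem_relabel_C.mp hu
  obtain ⟨b, hb, hvb⟩ := mem_relabel_C.mp hv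
  have hab : a ≠ b := fun he => hij (by rw [← ha, ← hb, he])
  exact h a b hab u hua v hvb

lemma relabel_compatible {P Q : Part4 V} {A B : Set V} (g : Fin 3 → Fin 3)
    (h : P.Compatible Q A B) : (P.relabel g).Compatible (Q.relabel g) A B := by
  intro v hv
  obtain ⟨hC, hX⟩ := h v hv
  refine ⟨fun i => ?_, hX⟩
  rw [mem_relabel_C, mem_relabel_C]
  constructor
  · rintro ⟨j, hj, hvj⟩; exact ⟨j, hj, (hC j).mp hvj⟩
  · rintro ⟨j, hj, hvj⟩; exact ⟨j, hj, (hC j).mpr hvj⟩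

end Part4

namespace RootedTD

variable {V : Type} {G : SimpleGraph V} {ι : Type} (D : RootedTD V G ι)

lemma bag_subset_Vsub (y : ι) : ↑(D.bag y) ⊆ D.Vsub y :=
  fun v hv => ⟨y, ⟨0, rfl⟩, hv⟩

lemma Vsub_root : D.Vsub D.root = Set.univ := by
  ext v
  simp only [Set.mem_univ, iff_true]
  obtain ⟨x, hx⟩ := D.vert_cover v
  exact ⟨x, D.parent_reach x, hx⟩

lemma Vsub_mono {c t : ι} (h : D.parent c = t) : D.Vsub c ⊆ D.Vsub t := by
  rintro v ⟨z, ⟨n, hn⟩, hv⟩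
  exact ⟨z, ⟨n + 1, by rw [Function.iterate_succ_apply', hn, h]⟩, hv⟩

/-- Class consistency along the tree for a compatible family of bag partitions. -/
lemma class_consistent (Qp : ι → Part4 V)
    (hcompat : ∀ y, y ≠ D.root →
      (Qp y).Compatible (Qp (D.parent y)) ↑(D.bag y) ↑(D.bag (D.parent y)))
    {v : V} {x y : ι} (hx : v ∈ D.bag x) (hy : v ∈ D.bag y) :
    (∀ i, v ∈ (Qp x).C i ↔ v ∈ (Qp y).C i) ∧ (v ∈ (Qp x).X ↔ v ∈ (Qp y).X) := by
  obtain ⟨i, j, hi, hj, hij, hA, hB⟩ := D.bag_chain hx hy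
  have step : ∀ z : ι, (up : ℕ) → up ≤ D.depth z → (∀ a ≤ up, v ∈ D.bag (D.parent^[a] z)) →
      (∀ i', v ∈ (Qp z).C i' ↔ v ∈ (Qp (D.parent^[up] z)).C i') ∧
        (v ∈ (Qp z).X ↔ v ∈ (Qp (D.parent^[up] z)).X) := by
    intro z up
    induction up with
    | zero => intro _ _; simp
    | succ n ih =>
      intro hup hbags
      obtain ⟨ihC, ihX⟩ := ih (Nat.le_of_succ_le hup) (fun a ha => hbags a (by omega))
      set zz := D.parent^[n] z with hzz
      have hzne : zz ≠ D.root := by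
        intro he
        have := D.depth_iterate (y := z) (a := n) (by omega)
        rw [← hzz, he, D.depth_root] at this
        omega
      have hpz : v ∈ D.bag (D.parent zz) := by
        have := hbags (n+1) le_rfl
        rwa [Function.iterate_succ_apply'] at this
      have hc := hcompat zz hzne v ⟨hbags n (by omega), hpz⟩
      rw [Function.iterate_succ_apply']
      exact ⟨fun i' => (ihC i').trans (hc.1 i'), ihX.trans hc.2⟩
  obtain ⟨hxC, hxX⟩ := step x i hi hA
  obtain ⟨hyC, hyX⟩ := step y j hj hB
  rw [hij] at hxC hxX
  exact ⟨fun i' => (hxC i').trans (hyC i').symm, hxX.trans hyX.symm⟩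

/-- Separation: a vertex in the subtree below s appearing in a bag outside that
subtree must lie in the bag of the parent of s. -/
lemma sep_lemma {v : V} {s z : ι} (hv : v ∈ D.Vsub s) (hz : v ∈ D.bag z)
    (hns : ¬ ∃ n, D.parent^[n] z = s) : v ∈ D.bag (D.parent s) := by
  obtain ⟨z₁, ⟨n₀, hn₀⟩, hvz₁⟩ := hv
  obtain ⟨i, j, hi, hj, hij, hA, _⟩ := D.bag_chain hvz₁ hz
  have hlt : n₀ + 1 ≤ i := by
    by_contra hcon
    have hin : i ≤ n₀ := by omega
    apply hns
    refine ⟨(n₀ - i) + j, ?_⟩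
    rw [Function.iterate_add_apply, ← hij, ← Function.iterate_add_apply]
    rw [show n₀ - i + i = n₀ by omega, hn₀]
  have := hA (n₀ + 1) hlt
  rwa [Function.iterate_succ_apply', hn₀] at this

lemma Vsub_decomp {t : ι} {v : V} (hv : v ∈ D.Vsub t) :
    v ∈ D.bag t ∨ ∃ c, D.parent c = t ∧ c ≠ t ∧ v ∈ D.Vsub c := by
  obtain ⟨z, ⟨n, hn⟩, hvz⟩ := hv
  have hS : (∃ n, D.parent^[n] z = t) := ⟨n, hn⟩
  set n₁ := sInf {n | D.parent^[n] z = t} with hn₁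
  have hmem : D.parent^[n₁] z = t := Nat.sInf_mem hS
  rcases Nat.eq_zero_or_pos n₁ with h0 | h0
  · rw [h0, Function.iterate_zero_apply] at hmem
    exact Or.inl (hmem ▸ hvz)
  · set c := D.parent^[n₁ - 1] z with hc
    refine Or.inr ⟨c, ?_, ?_, z, ⟨n₁ - 1, rfl⟩, hvz⟩
    · have h5 : D.parent^[(n₁ - 1) + 1] z = t := by
        rw [show n₁ - 1 + 1 = n₁ by omega]; exact hmem
      rwa [Function.iterate_succ_apply'] at h5
    · intro he
      have : n₁ - 1 ∈ {n | D.parent^[n] z = t} := he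
      have := Nat.sInf_le this
      omega

lemma Vsub_child_inter {t c c' : ι} (hc : D.parent c = t) (hct : c ≠ t)
    (hc' : D.parent c' = t) (hct' : c' ≠ t) (hne : c ≠ c') :
    D.Vsub c ∩ D.Vsub c' ⊆ ↑(D.bag t) := by
  rintro v ⟨hvc, hvc'⟩
  obtain ⟨z₂, hz₂sub, hvz₂⟩ := hvc'
  have hcroot : c ≠ D.root := by
    intro he; subst he; rw [D.parent_root] at hc; exact hct hc
  have hns : ¬ ∃ n, D.parent^[n] z₂ = c := by
    rintro ⟨n, hn⟩
    obtain ⟨n₂, hn₂⟩ := hz₂sub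
    have hcroot' : c' ≠ D.root := by
      intro he; subst he; rw [D.parent_root] at hc'; exact hct' hc'
    have hdz : n ≤ D.depth z₂ := by
      by_contra hcon
      have := D.iterate_eq_root_of_ge (y := z₂) (n := n) (by omega)
      rw [hn] at this
      exact hcroot this
    have hdz' : n₂ ≤ D.depth z₂ := by
      by_contra hcon
      have := D.iterate_eq_root_of_ge (y := z₂) (n := n₂) (by omega)
      rw [hn₂] at this
      exact hcroot' this
    have h1 := D.depth_iterate hdz
    have h2 := D.depth_iterate hdz'
    rw [hn] at h1
    rw [hn₂] at h2
    have hdc : D.depth t + 1 = D.depth c := by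
      have := D.depth_parent hcroot; rw [hc] at this; exact this
    have hdc' : D.depth t + 1 = D.depth c' := by
      have := D.depth_parent hcroot'; rw [hc'] at this; exact this
    have : n = n₂ := by omega
    subst this
    rw [hn] at hn₂
    exact hne hn₂
  have := D.sep_lemma hvc hvz₂ hns
  rwa [hc] at this

lemma Vsub_child_out {t c : ι} (hc : D.parent c = t) {v : V} {z : ι}
    (hv : v ∈ D.Vsub c) (hz : v ∈ D.bag z) (hzt : ¬ ∃ n, D.parent^[n] z = t) :
    v ∈ D.bag t := by
  have hns : ¬ ∃ n, D.parent^[n] z = c := by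
    rintro ⟨n, hn⟩
    exact hzt ⟨n + 1, by rw [Function.iterate_succ_apply', hn, hc]⟩
  have := D.sep_lemma hv hz hns
  rwa [hc] at this

end RootedTD

end Stage2
section Stage3

variable {V ι : Type} {G : SimpleGraph V} {D : RootedTD V G ι}

/-- Q realizes P at y. -/
def Realizes (G : SimpleGraph V) (D : RootedTD V G ι) (y : ι) (P Q : Part4 V) : Prop :=
  Q.IsPartitionOf (D.Vsub y) ∧ Q.Legal G ∧ Q.Compatible P (D.Vsub y) (D.bag y : Set V)

lemma psize_le_of_realizes {y : ι} {P Q : Part4 V} (h : Realizes G D y P Q) :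
    psize G D y P ≤ Q.X.ncard :=
  Nat.sInf_le ⟨Q, h.1, h.2.1, h.2.2, rfl⟩

lemma exists_realizer {y : ι} {P : Part4 V} (hP : P.IsPartitionOf (D.bag y : Set V))
    (hL : P.Legal G) : ∃ Q, Realizes G D y P Q := by
  refine ⟨⟨P.C, D.Vsub y \ ⋃ i, P.C i⟩, ⟨hP.1, ?_, ?_⟩, hL, ?_⟩
  · intro i
    exact Set.disjoint_left.mpr fun v hv ⟨_, hnot⟩ => hnot (Set.mem_iUnion.mpr ⟨i, hv⟩)
  · rw [Set.diff_union_self]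
    apply Set.union_eq_self_of_subset_right
    intro v hv
    obtain ⟨i, hi⟩ := Set.mem_iUnion.mp hv
    exact D.bag_subset_Vsub y (Part4.C_subset hP i hi)
  · intro v ⟨hvV, hvB⟩
    refine ⟨fun i => Iff.rfl, ?_, ?_⟩
    · rintro ⟨_, hnot⟩
      rcases Part4.mem_cases hP hvB with hx | ⟨i, hi⟩
      · exact hx
      · exact absurd (Set.mem_iUnion.mpr ⟨i, hi⟩) hnot
    · intro hx
      refine ⟨hvV, fun hmem => ?_⟩
      obtain ⟨i, hi⟩ := Set.mem_iUnion.mp hmem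
      exact Part4.not_memX_of_memC hP hi hx

lemma psize_attained {y : ι} {P : Part4 V} (hP : P.IsPartitionOf (D.bag y : Set V))
    (hL : P.Legal G) : ∃ Q, Realizes G D y P Q ∧ Q.X.ncard = psize G D y P := by
  obtain ⟨Q0, hQ0⟩ := exists_realizer hP hL
  have hne : {n | ∃ Q : Part4 V, Q.IsPartitionOf (D.Vsub y) ∧ Q.Legal G ∧
      Q.Compatible P (D.Vsub y) (D.bag y : Set V) ∧ Q.X.ncard = n}.Nonempty :=
    ⟨Q0.X.ncard, Q0, hQ0.1, hQ0.2.1, hQ0.2.2, rfl⟩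
  obtain ⟨Q, h1, h2, h3, h4⟩ := Nat.sInf_mem hne
  exact ⟨Q, ⟨h1, h2, h3⟩, h4⟩

/-- The specification of the good partition-with-label chosen at a non-root node. -/
def Spec (G : SimpleGraph V) (D : RootedTD V G ι) (y : ι) (Px : Part4 V)
    (aPx : Finset (Fin 3)) (q : Part4 V × Finset (Fin 3)) : Prop :=
  q.1.IsPartitionOf (D.bag y : Set V) ∧ q.1.Legal G ∧
  q.1.Compatible Px (D.bag y : Set V) (D.bag (D.parent y) : Set V) ∧
  (∀ Q : Part4 V, Q.IsPartitionOf (D.bag y : Set V) → Q.Legal G →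
      Q.Compatible Px (D.bag y : Set V) (D.bag (D.parent y) : Set V) →
      psize G D y q.1 ≤ psize G D y Q) ∧
  (∀ Q : Part4 V, Q.IsPartitionOf (D.bag y : Set V) → Q.Legal G →
      Q.Compatible Px (D.bag y : Set V) (D.bag (D.parent y) : Set V) →
      psize G D y Q = psize G D y q.1 → Q.X.ncard ≤ q.1.X.ncard) ∧
  ((∃ i, (q.1.C i).Nonempty) → ∀ i, i ∈ q.2 ↔ (q.1.C i).Nonempty) ∧
  (¬ (∃ i, (q.1.C i).Nonempty) → ∃ i ∈ aPx, q.2 = {i}) ∧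
  q.2 ⊆ aPx ∧ q.2.Nonempty

theorem spec_exists (y : ι) (Px : Part4 V) (aPx : Finset (Fin 3))
    (hPx : Px.IsPartitionOf (D.bag (D.parent y) : Set V)) (hPxL : Px.Legal G)
    (hane : aPx.Nonempty) (haS : ∀ i, (Px.C i).Nonempty → i ∈ aPx) :
    ∃ q : Part4 V × Finset (Fin 3), Spec G D y Px aPx q := by
  classical
  set B : Set V := (D.bag y : Set V) with hB
  set Bp : Set V := (D.bag (D.parent y) : Set V) with hBp
  set Cand : Part4 V → Prop := fun Q =>
    Q.IsPartitionOf B ∧ Q.Legal G ∧ Q.Compatible Px B Bp with hCand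
  -- a first candidate
  have hP₀ : Cand ⟨fun i => Px.C i ∩ B, B \ ⋃ i, Px.C i ∩ B⟩ := by
    refine ⟨⟨?_, ?_, ?_⟩, ?_, ?_⟩
    · intro i j hij
      exact Set.disjoint_left.mpr fun v ⟨hv, _⟩ ⟨hv', _⟩ =>
        Set.disjoint_left.mp (hPx.1 i j hij) hv hv'
    · intro i
      exact Set.disjoint_left.mpr fun v hv ⟨_, hnot⟩ => hnot (Set.mem_iUnion.mpr ⟨i, hv⟩)
    · rw [Set.diff_union_self]
      exact Set.union_eq_self_of_subset_right (Set.iUnion_subset fun i => Set.inter_subset_right)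
    · exact Part4.legal_subset (fun i => Set.inter_subset_left) hPxL
    · intro v hv
      obtain ⟨hvB, hvBp⟩ := hv
      refine ⟨?_, ?_, ?_⟩
      · intro i
        show v ∈ Px.C i ∩ B ↔ v ∈ Px.C i
        exact ⟨fun h => h.1, fun h => ⟨h, hvB⟩⟩
      · rintro ⟨_, hnot⟩
        rcases Part4.mem_cases hPx hvBp with hx | ⟨i, hi⟩
        · exact hx
        · exact absurd (Set.mem_iUnion.mpr ⟨i, Set.mem_inter hi hvB⟩) hnot
      · intro hx
        refine ⟨hvB, fun hmem => ?_⟩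
        obtain ⟨i, hi, _⟩ := Set.mem_iUnion.mp hmem
        exact Part4.not_memX_of_memC hPx hi hx
  set M : Set ℕ := {n | ∃ Q, Cand Q ∧ psize G D y Q = n} with hM
  have hMne : M.Nonempty := ⟨_, _, hP₀, rfl⟩
  set μ := sInf M with hμ
  obtain ⟨Q₁, hQ₁c, hQ₁μ⟩ := Nat.sInf_mem hMne
  set N : Set ℕ := {n | ∃ Q, Cand Q ∧ psize G D y Q = μ ∧ Q.X.ncard = n} with hN
  have hNne : N.Nonempty := ⟨Q₁.X.ncard, Q₁, hQ₁c, hQ₁μ, rfl⟩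
  have hNbdd : BddAbove N := by
    refine ⟨(D.bag y).card, ?_⟩
    rintro n ⟨Q, hQc, _, hQn⟩
    rw [← hQn, ← Set.ncard_coe_finset]
    exact Set.ncard_le_ncard (Part4.X_subset hQc.1) (D.bag y).finite_toSet
  obtain ⟨Py, hPyc, hPyμ, hPyν⟩ := Nat.sSup_mem hNne hNbdd
  have hmin : ∀ Q, Cand Q → psize G D y Py ≤ psize G D y Q := by
    intro Q hQ
    rw [hPyμ]
    exact Nat.sInf_le ⟨Q, hQ, rfl⟩
  have hmax : ∀ Q, Cand Q → psize G D y Q = psize G D y Py → Q.X.ncard ≤ Py.X.ncard := by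
    intro Q hQ hpq
    rw [hPyν]
    exact le_csSup hNbdd ⟨Q, hQ, by rw [hpq, hPyμ], rfl⟩
  -- merge classes not meeting the parent bag into a class indexed in aPx
  obtain ⟨istar, histar⟩ := hane
  set A : Set (Fin 3) := {j | ((Py.C j) ∩ Bp).Nonempty} with hA
  set g : Fin 3 → Fin 3 := fun j => if j ∈ A then j else istar with hg
  set Py' := Py.relabel g with hPy'
  have hgA : ∀ j ∈ A, g j = j := fun j hj => if_pos hj
  have hPy'part : Py'.IsPartitionOf B := Part4.relabel_isPartitionOf hPyc.1 g
  have hPy'leg : Py'.Legal G := Part4.relabel_legal hPyc.2.1 g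
  have hPy'comp : Py'.Compatible Px B Bp := by
    intro v hv
    obtain ⟨hC, hX⟩ := hPyc.2.2 v hv
    refine ⟨fun i => ⟨?_, ?_⟩, hX⟩
    · intro hvi
      obtain ⟨j, hgj, hvj⟩ := Part4.mem_relabel_C.mp hvi
      have hjA : j ∈ A := ⟨v, hvj, hv.2⟩
      rw [hgA j hjA] at hgj
      subst hgj
      exact (hC j).mp hvj
    · intro hvi
      have hvy : v ∈ Py.C i := (hC i).mpr hvi
      have hiA : i ∈ A := ⟨v, hvy, hv.2⟩
      exact Part4.mem_relabel_C.mpr ⟨i, hgA i hiA, hvy⟩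
  have hp'cand : Cand Py' := ⟨hPy'part, hPy'leg, hPy'comp⟩
  have hple : psize G D y Py' ≤ psize G D y Py := by
    obtain ⟨R, hR, hRX⟩ := psize_attained hPyc.1 hPyc.2.1
    have h1 : Realizes G D y Py' (R.relabel g) :=
      ⟨Part4.relabel_isPartitionOf hR.1 g, Part4.relabel_legal hR.2.1 g,
        Part4.relabel_compatible g hR.2.2⟩
    have h2 := psize_le_of_realizes h1
    have h3 : (R.relabel g).X = R.X := rfl
    rw [h3, hRX] at h2
    exact h2
  have hpeq : psize G D y Py' = psize G D y Py :=
    le_antisymm hple (hmin Py' hp'cand)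
  have hX'eq : Py'.X = Py.X := rfl
  -- the label set
  have hsub' : ∀ i, (Py'.C i).Nonempty → i ∈ aPx := by
    rintro i ⟨v, hv⟩
    obtain ⟨j, hgj, hvj⟩ := Part4.mem_relabel_C.mp hv
    by_cases hjA : j ∈ A
    · rw [hgA j hjA] at hgj
      obtain ⟨u, hu, hup⟩ := hjA
      have huB : u ∈ B := Part4.C_subset hPyc.1 j hu
      have hiff := (hPyc.2.2 u ⟨huB, hup⟩).1 j
      have hja : j ∈ aPx := haS j ⟨u, hiff.mp hu⟩
      rwa [hgj] at hja
    · rw [hg] at hgj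
      simp only [if_neg hjA] at hgj
      rw [← hgj]
      exact histar
  set S' : Finset (Fin 3) := Finset.univ.filter (fun i => (Py'.C i).Nonempty) with hS'
  refine ⟨(Py', if h : S'.Nonempty then S' else {istar}), hPy'part, hPy'leg, hPy'comp,
    ?_, ?_, ?_, ?_, ?_, ?_⟩
  · intro Q h1 h2 h3
    rw [hpeq]
    exact hmin Q ⟨h1, h2, h3⟩
  · intro Q h1 h2 h3 h4
    rw [hX'eq]
    exact hmax Q ⟨h1, h2, h3⟩ (by rw [h4, hpeq])
  · rintro ⟨i₀, hi₀⟩ i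
    have hS'ne : S'.Nonempty := ⟨i₀, Finset.mem_filter.mpr ⟨Finset.mem_univ _, hi₀⟩⟩
    rw [dif_pos hS'ne]
    simp only [hS', Finset.mem_filter, Finset.mem_univ, true_and]
  · intro hnone
    have hS'e : ¬ S'.Nonempty := by
      rintro ⟨i, hi⟩
      exact hnone ⟨i, (Finset.mem_filter.mp hi).2⟩
    exact ⟨istar, histar, by rw [dif_neg hS'e]⟩
  · intro i hi
    by_cases hS'ne : S'.Nonempty
    · rw [dif_pos hS'ne] at hi
      exact hsub' i (Finset.mem_filter.mp hi).2
    · rw [dif_neg hS'ne] at hi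
      rw [Finset.mem_singleton] at hi
      subst hi
      exact histar
  · by_cases hS'ne : S'.Nonempty
    · rw [dif_pos hS'ne]; exact hS'ne
    · rw [dif_neg hS'ne]; exact ⟨istar, Finset.mem_singleton_self _⟩

end Stage3
section Stage4

variable {V ι : Type} 

open Classical in
/-- Data chosen at the root: the separator partition restricted to the root bag. -/
noncomputable def rootData (G : SimpleGraph V) (D : RootedTD V G ι) (Pstar : Part4 V) :
    Part4 V × Finset (Fin 3) :=
  (Pstar.restrict (D.bag D.root : Set V),
    Finset.univ.filter
      (fun i => ((Pstar.restrict (D.bag D.root : Set V)).C i).Nonempty))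

open Classical in
noncomputable def stepQ (G : SimpleGraph V) (D : RootedTD V G ι)
    (pa : Part4 V × Finset (Fin 3)) (y : ι) : Part4 V × Finset (Fin 3) :=
  if h : ∃ q, Spec G D y pa.1 pa.2 q then h.choose else (⟨fun _ => ∅, ∅⟩, {0})

open Classical in
noncomputable def buildQ (G : SimpleGraph V) (D : RootedTD V G ι) (Pstar : Part4 V) :
    ℕ → ι → Part4 V × Finset (Fin 3)
  | 0, _ => rootData G D Pstar
  | n+1, y =>
    if y = D.root then rootData G D Pstar
    else stepQ G D (buildQ G D Pstar n (D.parent y)) y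

noncomputable def RR (G : SimpleGraph V) (D : RootedTD V G ι) (Pstar : Part4 V) (y : ι) :
    Part4 V × Finset (Fin 3) :=
  buildQ G D Pstar (D.depth y) y

lemma RR_root (G : SimpleGraph V) (D : RootedTD V G ι) (Pstar : Part4 V) :
    RR G D Pstar D.root = rootData G D Pstar := by
  unfold RR
  rw [D.depth_root]
  rfl

lemma RR_step (G : SimpleGraph V) (D : RootedTD V G ι) (Pstar : Part4 V) {y : ι}
    (hy : y ≠ D.root) :
    RR G D Pstar y = stepQ G D (RR G D Pstar (D.parent y)) y := by
  have hdp := D.depth_parent hy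
  show buildQ G D Pstar (D.depth y) y = _
  rw [← hdp]
  simp only [buildQ]
  rw [if_neg hy]
  rfl

/-- The basic invariant of the recursively chosen data. -/
def BasicInv (G : SimpleGraph V) (D : RootedTD V G ι) (Pstar : Part4 V) (y : ι) : Prop :=
  (RR G D Pstar y).1.IsPartitionOf (D.bag y : Set V) ∧
  (RR G D Pstar y).1.Legal G ∧
  (RR G D Pstar y).2.Nonempty ∧
  (∀ i, ((RR G D Pstar y).1.C i).Nonempty → i ∈ (RR G D Pstar y).2) ∧
  (y ≠ D.root →
    Spec G D y (RR G D Pstar (D.parent y)).1 (RR G D Pstar (D.parent y)).2 (RR G D Pstar y))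

lemma basic_all (G : SimpleGraph V) (D : RootedTD V G ι) (Pstar : Part4 V)
    (hPs : Pstar.IsPartitionOf Set.univ) (hPsL : Pstar.Legal G)
    (hrl : (rootData G D Pstar).2.Nonempty) : ∀ y, BasicInv G D Pstar y := by
  have key : ∀ n y, D.depth y = n → BasicInv G D Pstar y := by
    intro n
    induction n using Nat.strong_induction_on with
    | _ n ih =>
      intro y hd
      classical
      by_cases hy : y = D.root
      · subst hy
        rw [BasicInv, RR_root]
        refine ⟨?_, ?_, hrl, ?_, fun h => absurd rfl h⟩
        · have := Part4.restrict_isPartitionOf (B := (D.bag D.root : Set V)) hPs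
          rwa [Set.univ_inter] at this
        · exact Part4.restrict_legal hPsL
        · intro i hi
          exact Finset.mem_filter.mpr ⟨Finset.mem_univ _, hi⟩
      · have hdp := D.depth_parent hy
        have hbp : BasicInv G D Pstar (D.parent y) :=
          ih (D.depth (D.parent y)) (by omega) _ rfl
        have hex : ∃ q, Spec G D y (RR G D Pstar (D.parent y)).1
            (RR G D Pstar (D.parent y)).2 q :=
          spec_exists y _ _ hbp.1 hbp.2.1 hbp.2.2.1 hbp.2.2.2.1
        have hs : Spec G D y (RR G D Pstar (D.parent y)).1 (RR G D Pstar (D.parent y)).2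
            (RR G D Pstar y) := by
          rw [RR_step G D Pstar hy]
          unfold stepQ
          rw [dif_pos hex]
          exact hex.choose_spec
        refine ⟨hs.1, hs.2.1, hs.2.2.2.2.2.2.2.2, ?_, fun _ => hs⟩
        intro i hi
        exact (hs.2.2.2.2.2.1 ⟨i, hi⟩ i).mpr hi
  exact fun y => key (D.depth y) y rfl

end Stage4
section Stage5

/-- Pack items of weight ≤ S/2 with total weight ≤ S into three bins of size S/2. -/
theorem pack3 {α : Type} [DecidableEq α] (S : ℕ) :
    ∀ (s : Finset α) (w : α → ℕ), (∀ a ∈ s, 2 * w a ≤ S) → (∑ a ∈ s, w a) ≤ S →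
    ∃ f : α → Fin 3, ∀ b : Fin 3, 2 * ∑ a ∈ s.filter (fun a => f a = b), w a ≤ S := by
  intro s
  induction s using Finset.strongInduction with
  | _ s ih =>
    intro w h1 h2
    by_cases hc : s.card ≤ 3
    · -- few items: one per bin
      set e := s.equivFin with he
      refine ⟨fun a => if h : a ∈ s then Fin.castLE hc (e ⟨a, h⟩) else 0, fun b => ?_⟩
      set p : α → Prop := fun a => (if h : a ∈ s then Fin.castLE hc (e ⟨a, h⟩) else 0) = b
        with hp
      rcases Finset.eq_empty_or_nonempty (s.filter p) with hemp | ⟨a, ha⟩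
      · rw [hemp]
        simp
      · have hsub : s.filter p = {a} := by
          apply Finset.eq_singleton_iff_unique_mem.mpr
          refine ⟨ha, fun a' ha' => ?_⟩
          obtain ⟨has, hpa⟩ := Finset.mem_filter.mp ha
          obtain ⟨has', hpa'⟩ := Finset.mem_filter.mp ha'
          rw [hp] at hpa hpa'
          rw [dif_pos has] at hpa
          rw [dif_pos has'] at hpa'
          have : Fin.castLE hc (e ⟨a', has'⟩) = Fin.castLE hc (e ⟨a, has⟩) := by
            rw [hpa, hpa']
          have h3 : e ⟨a', has'⟩ = e ⟨a, has⟩ := Fin.castLE_injective hc this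
          have h4 : (⟨a', has'⟩ : {x // x ∈ s}) = ⟨a, has⟩ := e.injective h3
          exact congrArg Subtype.val h4
        rw [hsub, Finset.sum_singleton]
        exact h1 a (Finset.mem_filter.mp ha).1
    · -- at least 4 items: remove a minimal one
      push_neg at hc
      have hne : s.Nonempty := Finset.card_pos.mp (by omega)
      obtain ⟨x, hxs, hxmin⟩ := Finset.exists_min_image s w hne
      have h4w : 4 * w x ≤ S := by
        have hsmul := Finset.card_nsmul_le_sum s w (w x) (fun a ha => hxmin a ha)
        rw [smul_eq_mul] at hsmul
        have hsum_eq : s.sum w = ∑ a ∈ s, w a := rfl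
        rw [hsum_eq] at hsmul
        have h5 : 4 * w x ≤ s.card * w x := Nat.mul_le_mul_right _ (by omega)
        omega
      have hlt : s.erase x ⊂ s := Finset.erase_ssubset hxs
      have hsum' : w x + ∑ a ∈ s.erase x, w a = ∑ a ∈ s, w a :=
        Finset.add_sum_erase s w hxs
      obtain ⟨f, hf⟩ := ih (s.erase x) hlt w
        (fun a ha => h1 a (Finset.mem_of_mem_erase ha)) (by omega)
      set B : Fin 3 → ℕ := fun b => ∑ a ∈ (s.erase x).filter (fun a => f a = b), w a
        with hBdef
      have htot : B 0 + B 1 + B 2 = ∑ a ∈ s.erase x, w a := by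
        have := Finset.sum_fiberwise (s.erase x) f w
        rw [Fin.sum_univ_three] at this
        exact this
      obtain ⟨b₀, _, hb₀⟩ := Finset.exists_min_image Finset.univ B ⟨0, Finset.mem_univ 0⟩
      have h3B : 3 * B b₀ ≤ ∑ a ∈ s.erase x, w a := by
        have q0 := hb₀ 0 (Finset.mem_univ 0)
        have q1 := hb₀ 1 (Finset.mem_univ 1)
        have q2 := hb₀ 2 (Finset.mem_univ 2)
        omega
      refine ⟨Function.update f x b₀, fun b => ?_⟩
      have hfilter : s.filter (fun a => Function.update f x b₀ a = b) =
          if b = b₀ then insert x ((s.erase x).filter (fun a => f a = b))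
          else (s.erase x).filter (fun a => f a = b) := by
        ext a
        rw [Finset.mem_filter]
        by_cases hax : a = x
        · subst hax
          rw [Function.update_self]
          by_cases hbb : b = b₀
          · subst hbb
            rw [if_pos rfl, Finset.mem_insert]
            exact ⟨fun _ => Or.inl rfl, fun _ => ⟨hxs, rfl⟩⟩
          · rw [if_neg hbb, Finset.mem_filter, Finset.mem_erase]
            constructor
            · rintro ⟨_, hb⟩; exact absurd hb.symm hbb
            · rintro ⟨⟨hne', _⟩, _⟩; exact absurd rfl hne'
        · rw [Function.update_of_ne hax]
          by_cases hbb : b = b₀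
          · rw [if_pos hbb, Finset.mem_insert, Finset.mem_filter, Finset.mem_erase]
            constructor
            · rintro ⟨has, hfa⟩; exact Or.inr ⟨⟨hax, has⟩, hfa⟩
            · rintro (h | ⟨⟨_, has⟩, hfa⟩)
              · exact absurd h hax
              · exact ⟨has, hfa⟩
          · rw [if_neg hbb, Finset.mem_filter, Finset.mem_erase]
            exact ⟨fun ⟨has, hfa⟩ => ⟨⟨hax, has⟩, hfa⟩, fun ⟨⟨_, has⟩, hfa⟩ => ⟨has, hfa⟩⟩
      rw [hfilter]
      by_cases hbb : b = b₀
      · subst hbb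
        rw [if_pos rfl]
        have hxnot : x ∉ (s.erase x).filter (fun a => f a = b) := by
          intro hmem
          exact (Finset.notMem_erase x s) (Finset.mem_of_mem_filter x hmem)
        rw [Finset.sum_insert hxnot]
        have hq : 3 * B b ≤ ∑ a ∈ s.erase x, w a := h3B
        have hB0 : B b = ∑ a ∈ (s.erase x).filter (fun a => f a = b), w a := rfl
        omega
      · rw [if_neg hbb]
        exact hf b

end Stage5
section Stage6

lemma ncard_biUnion {α β : Type} [Finite β] (s : Finset α) (f : α → Set β)
    (hdisj : ∀ a ∈ s, ∀ a' ∈ s, a ≠ a' → Disjoint (f a) (f a')) :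
    (⋃ a ∈ s, f a).ncard = ∑ a ∈ s, (f a).ncard := by
  classical
  induction s using Finset.induction_on with
  | empty => simp
  | @insert a s ha ih =>
    rw [Finset.sum_insert ha, Finset.set_biUnion_insert]
    rw [Set.ncard_union_eq ?hd (Set.toFinite _) (Set.toFinite _)]
    · rw [ih (fun x hx x' hx' hne => hdisj x (Finset.mem_insert_of_mem hx) x'
        (Finset.mem_insert_of_mem hx') hne)]
    case hd =>
      rw [Set.disjoint_left]
      intro v hv hv'
      obtain ⟨x, hx, hvx⟩ := Set.mem_iUnion₂.mp hv'
      have hax : a ≠ x := fun he => ha (he ▸ hx)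
      exact Set.disjoint_left.mp
        (hdisj a (Finset.mem_insert_self a s) x (Finset.mem_insert_of_mem hx) hax) hv hvx

theorem sep_exists {V : Type} [Fintype V] {m : ℕ} {G : SimpleGraph V} (k : ℕ)
    (D' : RootedTD V G (Fin m)) (hk : ∀ x, (D'.bag x).card ≤ k + 1)
    (W : Finset V) (hW : 0 < W.card) :
    ∃ P : Part4 V, P.IsPartitionOf Set.univ ∧ P.Legal G ∧ P.X.ncard ≤ k + 1 ∧
      ∀ b, 2 * (P.C b ∩ (W : Set V)).ncard ≤ W.card := by
  classical
  set heavy : Fin m → Prop := fun z => W.card < 2 * ((W : Set V) ∩ D'.Vsub z).ncard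
    with hheavy
  have hrootheavy : heavy D'.root := by
    show W.card < 2 * ((W : Set V) ∩ D'.Vsub D'.root).ncard
    rw [D'.Vsub_root, Set.inter_univ, Set.ncard_coe_finset]
    omega
  set H := Finset.univ.filter (fun z => heavy z) with hH
  have hHne : H.Nonempty := ⟨D'.root, Finset.mem_filter.mpr ⟨Finset.mem_univ _, hrootheavy⟩⟩
  obtain ⟨t, htH, htmax⟩ := Finset.exists_max_image H D'.depth hHne
  have htheavy : W.card < 2 * ((W : Set V) ∩ D'.Vsub t).ncard := (Finset.mem_filter.mp htH).2
  have hlight : ∀ c, D'.parent c = t → c ≠ t →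
      2 * ((W : Set V) ∩ D'.Vsub c).ncard ≤ W.card := by
    intro c hc hct
    by_contra hcon
    push_neg at hcon
    have hcH : c ∈ H := Finset.mem_filter.mpr ⟨Finset.mem_univ _, hcon⟩
    have hle := htmax c hcH
    have hcroot : c ≠ D'.root := by
      intro he; subst he; rw [D'.parent_root] at hc; exact hct hc
    have := D'.depth_parent hcroot
    rw [hc] at this
    omega
  set piece : Option (Fin m) → Set V := fun o =>
    match o with
    | none => (D'.Vsub t)ᶜ
    | some c => D'.Vsub c \ (D'.bag t : Set V)
    with hpiece
  set chl : Finset (Fin m) := Finset.univ.filter (fun c => D'.parent c = t ∧ c ≠ t)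
    with hchl
  set items : Finset (Option (Fin m)) := insert none (chl.image some) with hitems
  have hmem_items : ∀ o ∈ items, o = none ∨ ∃ c, (D'.parent c = t ∧ c ≠ t) ∧ o = some c := by
    intro o ho
    rw [hitems, Finset.mem_insert] at ho
    rcases ho with h | h
    · exact Or.inl h
    · obtain ⟨c, hc, hco⟩ := Finset.mem_image.mp h
      exact Or.inr ⟨c, (Finset.mem_filter.mp hc).2, hco.symm⟩
  have hpiece_none : piece none = (D'.Vsub t)ᶜ := rfl
  have hpiece_some : ∀ c, piece (some c) = D'.Vsub c \ (D'.bag t : Set V) := fun c => rfl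
  have hdisj : ∀ o ∈ items, ∀ o' ∈ items, o ≠ o' → Disjoint (piece o) (piece o') := by
    have key : ∀ o ∈ items, ∀ o' ∈ items, o ≠ o' → ∀ v, v ∈ piece o → v ∈ piece o' → False := by
      intro o ho o' ho' hne v hv hv'
      rcases hmem_items o ho with rfl | ⟨c, hc, rfl⟩
      · rcases hmem_items o' ho' with rfl | ⟨c', hc', rfl⟩
        · exact hne rfl
        · rw [hpiece_none] at hv
          rw [hpiece_some] at hv'
          exact hv (D'.Vsub_mono hc'.1 hv'.1)
      · rcases hmem_items o' ho' with rfl | ⟨c', hc', rfl⟩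
        · rw [hpiece_none] at hv'
          rw [hpiece_some] at hv
          exact hv' (D'.Vsub_mono hc.1 hv.1)
        · have hcc' : c ≠ c' := fun he => hne (he ▸ rfl)
          rw [hpiece_some] at hv hv'
          exact hv.2 (D'.Vsub_child_inter hc.1 hc.2 hc'.1 hc'.2 hcc' ⟨hv.1, hv'.1⟩)
    intro o ho o' ho' hne
    exact Set.disjoint_left.mpr fun v hv hv' => key o ho o' ho' hne v hv hv'
  set wgt : Option (Fin m) → ℕ := fun o => ((W : Set V) ∩ piece o).ncard with hwgt
  have h1 : ∀ o ∈ items, 2 * wgt o ≤ W.card := by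
    intro o ho
    rcases hmem_items o ho with rfl | ⟨c, hc, rfl⟩
    · have hsplit : ((W : Set V) ∩ D'.Vsub t).ncard + ((W : Set V) ∩ (D'.Vsub t)ᶜ).ncard
          = W.card := by
        rw [← Set.ncard_union_eq ?hd (Set.toFinite _) (Set.toFinite _)]
        · rw [Set.inter_union_compl, Set.ncard_coe_finset]
        case hd =>
          exact Set.disjoint_left.mpr fun v hv hv' => hv'.2 hv.2
      rw [hwgt]
      simp only [hpiece_none]
      omega
    · have hsub : (W : Set V) ∩ piece (some c) ⊆ (W : Set V) ∩ D'.Vsub c := by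
        rw [hpiece_some]
        exact Set.inter_subset_inter_right _ Set.diff_subset
      have ha1 := Set.ncard_le_ncard hsub (Set.toFinite _)
      have ha2 := hlight c hc.1 hc.2
      show 2 * ((W : Set V) ∩ piece (some c)).ncard ≤ W.card
      omega
  have h2 : ∑ o ∈ items, wgt o ≤ W.card := by
    rw [hwgt]
    rw [← ncard_biUnion items (fun o => (W : Set V) ∩ piece o) (fun o ho o' ho' hne =>
      Set.disjoint_left.mpr fun v hv hv' =>
        Set.disjoint_left.mp (hdisj o ho o' ho' hne) hv.2 hv'.2)]
    rw [← Set.ncard_coe_finset W]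
    exact Set.ncard_le_ncard (Set.iUnion₂_subset fun o _ => Set.inter_subset_left)
      (Set.toFinite _)
  obtain ⟨f, hf⟩ := pack3 W.card items wgt h1 h2
  refine ⟨⟨fun b => ⋃ o ∈ items.filter (fun o => f o = b), piece o, (D'.bag t : Set V)⟩,
    ⟨?_, ?_, ?_⟩, ?_, ?_, ?_⟩
  · -- classes pairwise disjoint
    intro i j hij
    rw [Set.disjoint_left]
    intro v hv hv'
    obtain ⟨o, ho, hvo⟩ := Set.mem_iUnion₂.mp hv
    obtain ⟨o', ho', hvo'⟩ := Set.mem_iUnion₂.mp hv'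
    obtain ⟨hoi, hfo⟩ := Finset.mem_filter.mp ho
    obtain ⟨hoi', hfo'⟩ := Finset.mem_filter.mp ho'
    have hne : o ≠ o' := by
      intro he; subst he; exact hij (hfo ▸ hfo' ▸ rfl)
    exact Set.disjoint_left.mp (hdisj o hoi o' hoi' hne) hvo hvo'
  · -- classes disjoint from X
    intro i
    rw [Set.disjoint_left]
    intro v hv hvx
    obtain ⟨o, ho, hvo⟩ := Set.mem_iUnion₂.mp hv
    rcases hmem_items o (Finset.mem_filter.mp ho).1 with rfl | ⟨c, hc, rfl⟩
    · exact (hpiece_none ▸ hvo) (D'.bag_subset_Vsub t hvx)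
    · exact (hpiece_some c ▸ hvo).2 hvx
  · -- union is everything
    apply Set.eq_univ_of_forall
    intro v
    rw [Set.mem_union]
    by_cases hvb : v ∈ (D'.bag t : Set V)
    · exact Or.inl hvb
    · right
      rw [Set.mem_iUnion]
      by_cases hvt : v ∈ D'.Vsub t
      · rcases D'.Vsub_decomp hvt with hvbag | ⟨c, hc1, hc2, hc3⟩
        · exact absurd hvbag hvb
        · have hmem : some c ∈ items := by
            rw [hitems, Finset.mem_insert]
            exact Or.inr (Finset.mem_image.mpr ⟨c,
              Finset.mem_filter.mpr ⟨Finset.mem_univ _, hc1, hc2⟩, rfl⟩)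
          refine ⟨f (some c), Set.mem_iUnion₂.mpr ⟨some c, ?_, ?_⟩⟩
          · exact Finset.mem_filter.mpr ⟨hmem, rfl⟩
          · rw [hpiece_some]; exact ⟨hc3, hvb⟩
      · have hmem : none ∈ items := by rw [hitems]; exact Finset.mem_insert_self _ _
        refine ⟨f none, Set.mem_iUnion₂.mpr ⟨none, ?_, ?_⟩⟩
        · exact Finset.mem_filter.mpr ⟨hmem, rfl⟩
        · rw [hpiece_none]; exact hvt
  · -- legal
    intro i j hij u hu v hv hadj
    obtain ⟨o, ho, huo⟩ := Set.mem_iUnion₂.mp hu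
    obtain ⟨o', ho', hvo'⟩ := Set.mem_iUnion₂.mp hv
    obtain ⟨hoi, hfo⟩ := Finset.mem_filter.mp ho
    obtain ⟨hoi', hfo'⟩ := Finset.mem_filter.mp ho'
    have hne : o ≠ o' := by
      intro he; subst he; exact hij (hfo ▸ hfo' ▸ rfl)
    obtain ⟨z, hz1, hz2⟩ := D'.edge_cover hadj
    rcases hmem_items o hoi with rfl | ⟨c, hc, rfl⟩
    · rcases hmem_items o' hoi' with rfl | ⟨c', hc', rfl⟩
      · exact hne rfl
      · have huo' : u ∈ (D'.Vsub t)ᶜ := hpiece_none ▸ huo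
        have hvo'' : v ∈ D'.Vsub c' \ (D'.bag t : Set V) := hpiece_some c' ▸ hvo'
        by_cases hzt : ∃ n, D'.parent^[n] z = t
        · exact huo' ⟨z, hzt, hz1⟩
        · exact hvo''.2 (D'.Vsub_child_out hc'.1 hvo''.1 hz2 hzt)
    · rcases hmem_items o' hoi' with rfl | ⟨c', hc', rfl⟩
      · have hvo'' : v ∈ (D'.Vsub t)ᶜ := hpiece_none ▸ hvo'
        have huo' : u ∈ D'.Vsub c \ (D'.bag t : Set V) := hpiece_some c ▸ huo
        by_cases hzt : ∃ n, D'.parent^[n] z = t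
        · exact hvo'' ⟨z, hzt, hz2⟩
        · exact huo'.2 (D'.Vsub_child_out hc.1 huo'.1 hz1 hzt)
      · have hcc' : c ≠ c' := fun he => hne (he ▸ rfl)
        have huo' : u ∈ D'.Vsub c \ (D'.bag t : Set V) := hpiece_some c ▸ huo
        have hvo'' : v ∈ D'.Vsub c' \ (D'.bag t : Set V) := hpiece_some c' ▸ hvo'
        by_cases hzc : ∃ n, D'.parent^[n] z = c
        · have hvc : v ∈ D'.Vsub c := ⟨z, hzc, hz2⟩
          exact hvo''.2 (D'.Vsub_child_inter hc.1 hc.2 hc'.1 hc'.2 hcc' ⟨hvc, hvo''.1⟩)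
        · have hub : u ∈ D'.bag (D'.parent c) := D'.sep_lemma huo'.1 hz1 hzc
          rw [hc.1] at hub
          exact huo'.2 hub
  · rw [Set.ncard_coe_finset]
    exact hk t
  · -- balance
    intro b
    have hCW : (⋃ o ∈ items.filter (fun o => f o = b), piece o) ∩ (W : Set V) =
        ⋃ o ∈ items.filter (fun o => f o = b), ((W : Set V) ∩ piece o) := by
      ext v
      simp only [Set.mem_inter_iff, Set.mem_iUnion₂]
      constructor
      · rintro ⟨⟨o, ho, hvo⟩, hw⟩; exact ⟨o, ho, hw, hvo⟩
      · rintro ⟨o, ho, hw, hvo⟩; exact ⟨⟨o, ho, hvo⟩, hw⟩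
    rw [hCW]
    rw [ncard_biUnion _ _ (fun o ho o' ho' hne =>
      Set.disjoint_left.mpr fun v hv hv' =>
        Set.disjoint_left.mp (hdisj o (Finset.mem_filter.mp ho).1 o'
          (Finset.mem_filter.mp ho').1 hne) hv.2 hv'.2)]
    exact hf b

end Stage6
/-- if tw(G) ≤ k and the root bag has size more than 2(k+1), then a
split of the tree decomposition exists: a good partition P of V together with a
labeling a of the nodes by nonempty subsets of {1,2,3} satisfying (a) and (b). -/
theorem stmt8 {V ι : Type} [Fintype V] [DecidableEq V] (G : SimpleGraph V)
    (D : RootedTD V G ι) (k : ℕ)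
    (htw : ∃ (m : ℕ) (D' : RootedTD V G (Fin m)), ∀ x, (D'.bag x).card ≤ k + 1)
    (hroot : 2 * (k + 1) < (D.bag D.root).card) :
    ∃ (P : Part4 V) (a : ι → Finset (Fin 3)),
      P.IsPartitionOf Set.univ ∧ P.Legal G ∧
      GoodRoot G D k (P.restrict (D.bag D.root : Set V)) ∧
      (∀ y, y ≠ D.root →
        GoodWrt G D y (P.restrict (D.bag y : Set V))
          (P.restrict (D.bag (D.parent y) : Set V))) ∧
      (∀ x, (a x).Nonempty) ∧
      (∀ x, (∃ i, (P.C i ∩ (D.bag x : Set V)).Nonempty) →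
          ∀ i, i ∈ a x ↔ (P.C i ∩ (D.bag x : Set V)).Nonempty) ∧
      (∀ x, ¬ (∃ i, (P.C i ∩ (D.bag x : Set V)).Nonempty) →
          ∃ i ∈ a (D.parent x), a x = {i}) ∧
      (∀ x, a x ⊆ a (D.parent x)) := by
  classical
  obtain ⟨m, D', hk⟩ := htw
  have hWpos : 0 < (D.bag D.root).card := by omega
  obtain ⟨Pstar, hPs, hPsL, hPsX, hPsW⟩ := sep_exists k D' hk (D.bag D.root) hWpos
  -- the root label is nonempty
  have hrl : (rootData G D Pstar).2.Nonempty := by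
    have hvex : ∃ v ∈ D.bag D.root, v ∉ Pstar.X := by
      by_contra hcon
      push_neg at hcon
      have hsub : (D.bag D.root : Set V) ⊆ Pstar.X := fun v hv => hcon v hv
      have h1 : ((D.bag D.root : Set V)).ncard ≤ Pstar.X.ncard :=
        Set.ncard_le_ncard hsub (Set.toFinite _)
      rw [Set.ncard_coe_finset] at h1
      omega
    obtain ⟨v, hvb, hvx⟩ := hvex
    rcases Part4.mem_cases hPs (Set.mem_univ v) with hX | ⟨i, hC⟩
    · exact absurd hX hvx
    · exact ⟨i, Finset.mem_filter.mpr ⟨Finset.mem_univ _, ⟨v, hC, hvb⟩⟩⟩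
  have hbasic := basic_all G D Pstar hPs hPsL hrl
  set Qp : ι → Part4 V := fun x => (RR G D Pstar x).1 with hQp
  have hpart : ∀ x, (Qp x).IsPartitionOf (D.bag x : Set V) := fun x => (hbasic x).1
  have hleg : ∀ x, (Qp x).Legal G := fun x => (hbasic x).2.1
  have hspec : ∀ y, y ≠ D.root → Spec G D y (Qp (D.parent y)) ((RR G D Pstar (D.parent y)).2)
      (RR G D Pstar y) := fun y hy => (hbasic y).2.2.2.2 hy
  have hcompat : ∀ y, y ≠ D.root →
      (Qp y).Compatible (Qp (D.parent y)) (D.bag y : Set V) (D.bag (D.parent y) : Set V) :=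
    fun y hy => (hspec y hy).2.2.1
  -- the glued global partition
  set P : Part4 V := ⟨fun i => {v | ∃ x, v ∈ D.bag x ∧ v ∈ (Qp x).C i},
    {v | ∃ x, v ∈ D.bag x ∧ v ∈ (Qp x).X}⟩ with hPdef
  have hmemC : ∀ v x i, v ∈ D.bag x → (v ∈ P.C i ↔ v ∈ (Qp x).C i) := by
    intro v x i hvx
    constructor
    · rintro ⟨x', hvx', hC⟩
      exact ((D.class_consistent Qp hcompat hvx' hvx).1 i).mp hC
    · intro h
      exact ⟨x, hvx, h⟩
  have hmemX : ∀ v x, v ∈ D.bag x → (v ∈ P.X ↔ v ∈ (Qp x).X) := by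
    intro v x hvx
    constructor
    · rintro ⟨x', hvx', hX⟩
      exact (D.class_consistent Qp hcompat hvx' hvx).2.mp hX
    · intro h
      exact ⟨x, hvx, h⟩
  have hrestrict : ∀ x, P.restrict (D.bag x : Set V) = Qp x := by
    intro x
    apply Part4.ext'
    · funext i
      ext v
      show v ∈ P.C i ∩ (D.bag x : Set V) ↔ _
      constructor
      · rintro ⟨h1, h2⟩
        exact (hmemC v x i h2).mp h1
      · intro h
        have hvb : v ∈ (D.bag x : Set V) := Part4.C_subset (hpart x) i h
        exact ⟨(hmemC v x i hvb).mpr h, hvb⟩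
    · ext v
      show v ∈ P.X ∩ (D.bag x : Set V) ↔ _
      constructor
      · rintro ⟨h1, h2⟩
        exact (hmemX v x h2).mp h1
      · intro h
        have hvb : v ∈ (D.bag x : Set V) := Part4.X_subset (hpart x) h
        exact ⟨(hmemX v x hvb).mpr h, hvb⟩
  have hCx : ∀ x i, P.C i ∩ (D.bag x : Set V) = (Qp x).C i := by
    intro x i
    exact congrFun (congrArg Part4.C (hrestrict x)) i
  have hPpart : P.IsPartitionOf Set.univ := by
    refine ⟨?_, ?_, ?_⟩
    · intro i j hij
      rw [Set.disjoint_left]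
      rintro v ⟨x, hvx, hC⟩ hv'
      have hC' : v ∈ (Qp x).C j := (hmemC v x j hvx).mp hv'
      exact Set.disjoint_left.mp ((hpart x).1 i j hij) hC hC'
    · intro i
      rw [Set.disjoint_left]
      rintro v ⟨x, hvx, hC⟩ hv'
      have hX' : v ∈ (Qp x).X := (hmemX v x hvx).mp hv'
      exact Part4.not_memX_of_memC (hpart x) hC hX'
    · apply Set.eq_univ_of_forall
      intro v
      obtain ⟨x, hvx⟩ := D.vert_cover v
      rcases Part4.mem_cases (hpart x) (Finset.mem_coe.mpr hvx) with hX | ⟨i, hC⟩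
      · exact Or.inl ⟨x, hvx, hX⟩
      · exact Or.inr (Set.mem_iUnion.mpr ⟨i, x, hvx, hC⟩)
  have hPleg : P.Legal G := by
    intro i j hij u hu v hv hadj
    obtain ⟨z, hz1, hz2⟩ := D.edge_cover hadj
    exact hleg z i j hij u ((hmemC u z i hz1).mp hu) v ((hmemC v z j hz2).mp hv) hadj
  have hQroot : Qp D.root = Pstar.restrict (D.bag D.root : Set V) := by
    show (RR G D Pstar D.root).1 = _
    rw [RR_root G D Pstar]
    rfl
  refine ⟨P, fun x => (RR G D Pstar x).2, hPpart, hPleg, ?_, ?_, ?_, ?_, ?_, ?_⟩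
  · -- GoodRoot
    rw [hrestrict D.root, hQroot]
    have hreal : Realizes G D D.root (Pstar.restrict (D.bag D.root : Set V)) Pstar := by
      refine ⟨by rw [D.Vsub_root]; exact hPs, hPsL, ?_⟩
      rintro v ⟨_, hv2⟩
      exact ⟨fun i => ⟨fun h => ⟨h, hv2⟩, fun h => h.1⟩, fun h => ⟨h, hv2⟩, fun h => h.1⟩
    have hps : psize G D D.root (Pstar.restrict (D.bag D.root : Set V)) ≤ k + 1 :=
      le_trans (psize_le_of_realizes hreal) hPsX
    refine ⟨fun i => ?_, hps⟩
    have h2 := hPsW i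
    have h1 : ((Pstar.restrict (D.bag D.root : Set V)).C i).ncard =
        (Pstar.C i ∩ (D.bag D.root : Set V)).ncard := rfl
    omega
  · -- GoodWrt
    intro y hy
    rw [hrestrict y, hrestrict (D.parent y)]
    have hs := hspec y hy
    exact ⟨hs.1, hs.2.1, hs.2.2.1, hs.2.2.2.1, hs.2.2.2.2.1⟩
  · -- labels nonempty
    exact fun x => (hbasic x).2.2.1
  · -- condition (a)
    intro x hex i
    rw [hCx x i]
    by_cases hx : x = D.root
    · subst hx
      have hq1 : (RR G D Pstar D.root).2 = (rootData G D Pstar).2 := by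
        rw [RR_root G D Pstar]
      have hq2 : Qp D.root = (rootData G D Pstar).1 := by
        show (RR G D Pstar D.root).1 = _
        rw [RR_root G D Pstar]
      show i ∈ (RR G D Pstar D.root).2 ↔ ((Qp D.root).C i).Nonempty
      rw [hq1, hq2]
      exact ⟨fun h => (Finset.mem_filter.mp h).2,
        fun h => Finset.mem_filter.mpr ⟨Finset.mem_univ _, h⟩⟩
    · have hs := hspec x hx
      have hex' : ∃ i, ((Qp x).C i).Nonempty := by
        obtain ⟨j, hj⟩ := hex
        exact ⟨j, by rwa [hCx x j] at hj⟩
      exact hs.2.2.2.2.2.1 hex' i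
  · -- singleton condition
    intro x hnone
    by_cases hx : x = D.root
    · exfalso
      subst hx
      obtain ⟨i, hi⟩ := hrl
      have : ((rootData G D Pstar).1.C i).Nonempty := (Finset.mem_filter.mp hi).2
      apply hnone
      refine ⟨i, ?_⟩
      rw [hCx D.root i]
      have hq : Qp D.root = (rootData G D Pstar).1 := by
        show (RR G D Pstar D.root).1 = _; rw [RR_root]
      rwa [hq]
    · have hs := hspec x hx
      have hnone' : ¬ ∃ i, ((Qp x).C i).Nonempty := by
        rintro ⟨j, hj⟩
        exact hnone ⟨j, by rw [hCx x j]; exact hj⟩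
      exact hs.2.2.2.2.2.2.1 hnone'
  · -- condition (b)
    intro x
    by_cases hx : x = D.root
    · subst hx
      rw [D.parent_root]
    · exact (hspec x hx).2.2.2.2.2.2.2.1
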